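/- Let Γ_N be the graph formed by two disjoint complete graphs K_N, K'_N joined by c additional edges (v_i, v'_i) with v_i ∈ K_N, v'_i ∈ K'_N, i = 1,…,c, with the v_i distinct and the v'_i distinct, and c < N - 1. Then N/(N-1) is an eigenvalue of the normalized Laplacian of Γ_N with multiplicity at least 2(N-1-c). -/

import Mathlib

open Matrix Finset
open scoped Classical

/-- The symmetric normalized Laplacian `I - D^{-1/2} A D^{-1/2}`. -/
noncomputable def normLap {V : Type*} [Fintype V] [DecidableEq V] (G : SimpleGraph V) :
    Matrix V V ℝ :=
  1 - Matrix.of fun i j =>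
    (G.adjMatrix ℝ) i j / (Real.sqrt (G.degree i) * Real.sqrt (G.degree j))

section Aux

lemma aux_count {n : Type*} [Fintype n] [DecidableEq n]
    {A : Matrix n n ℝ} (hA : A.IsHermitian) (μ : ℝ)
    {ι : Type*} [Fintype ι] (f : ι → EuclideanSpace ℝ n) (hf : LinearIndependent ℝ f)
    (heig : ∀ i, A *ᵥ ⇑(f i) = μ • ⇑(f i)) :
    Fintype.card ι ≤ (Finset.univ.filter fun i => hA.eigenvalues i = μ).card := by
  classical
  set b := hA.eigenvectorBasis with hb
  set s := (Finset.univ.filter fun i => hA.eigenvalues i = μ) with hs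
  have hrepr : ∀ (x : EuclideanSpace ℝ n) (i : n),
      b.repr ((Matrix.toEuclideanLin A) x) i = hA.eigenvalues i * b.repr x i := by
    intro x i
    have hTb : ∀ j : n, (Matrix.toEuclideanLin A) (b j)
        = hA.eigenvalues j • b j := by
      intro j
      apply (WithLp.equiv 2 (n → ℝ)).injective
      simp only [Matrix.toEuclideanLin_apply]
      exact hA.mulVec_eigenvectorBasis j
    conv_lhs => rw [← b.sum_repr x]
    simp only [map_sum, _root_.map_smul, hTb, smul_smul, b.repr_self]
    rw [show ∀ w : n → EuclideanSpace ℝ n, (∑ k, w k) i = ∑ k, w k i from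
      fun w => by simp [WithLp.ofLp_sum]]
    simp [EuclideanSpace.single_apply, mul_comm]
  have hmem : ∀ j, f j ∈ Submodule.span ℝ ((s.image b : Finset (EuclideanSpace ℝ n)) : Set _) := by
    intro j
    have hzero : ∀ i, i ∉ s → b.repr (f j) i = 0 := by
      intro i hi
      have h1 : (Matrix.toEuclideanLin A) (f j) = μ • f j := by
        apply (WithLp.equiv 2 (n → ℝ)).injective
        simp only [Matrix.toEuclideanLin_apply]
        exact heig j
      have h2 := hrepr (f j) i
      rw [h1] at h2
      have h3 : μ * b.repr (f j) i = hA.eigenvalues i * b.repr (f j) i := by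
        simpa [_root_.map_smul] using h2
      have hne : hA.eigenvalues i ≠ μ := by simpa [hs] using hi
      by_contra hc
      exact hne (mul_right_cancel₀ hc h3.symm)
    rw [← b.sum_repr (f j)]
    refine Submodule.sum_mem _ fun i _ => ?_
    by_cases hi : i ∈ s
    · exact Submodule.smul_mem _ _ (Submodule.subset_span (by
        simp only [Finset.coe_image, Set.mem_image, Finset.mem_coe]; exact ⟨i, hi, rfl⟩))
    · rw [hzero i hi]; simp
  have h1 : Fintype.card ι = Module.finrank ℝ (Submodule.span ℝ (Set.range f)) :=
    (finrank_span_eq_card hf).symm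
  have h2 : Submodule.span ℝ (Set.range f) ≤ Submodule.span ℝ ((s.image b : Finset _) : Set _) :=
    Submodule.span_le.mpr (by rintro x ⟨j, rfl⟩; exact hmem j)
  calc Fintype.card ι = _ := h1
    _ ≤ Module.finrank ℝ (Submodule.span ℝ ((s.image b : Finset _) : Set (EuclideanSpace ℝ n))) :=
        Submodule.finrank_mono h2
    _ ≤ (s.image b).card := finrank_span_finset_le_card _
    _ ≤ s.card := Finset.card_image_le

variable {N c : ℕ} (v v' : Fin c → Fin N) (G : SimpleGraph (Fin N ⊕ Fin N))
  (hAdj : ∀ x y, G.Adj x y ↔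
      (x ≠ y ∧ x.isLeft = y.isLeft) ∨
        ∃ i, (x = Sum.inl (v i) ∧ y = Sum.inr (v' i)) ∨
             (x = Sum.inr (v' i) ∧ y = Sum.inl (v i)))

include hAdj

lemma degree_left (a : Fin N) (ha : a ∉ Set.range v) :
    G.degree (Sum.inl a) = N - 1 := by
  classical
  have hnb : G.neighborFinset (Sum.inl a) = (Finset.univ.erase a).image Sum.inl := by
    ext y
    simp only [SimpleGraph.mem_neighborFinset, Finset.mem_image, Finset.mem_erase,
      Finset.mem_univ, and_true]
    rw [hAdj]
    constructor
    · rintro (⟨hne, hLL⟩ | ⟨i, ⟨h1, h2⟩ | ⟨h1, h2⟩⟩)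
      · cases y with
        | inl b => exact ⟨b, fun h => hne (by rw [h]), rfl⟩
        | inr b => simp at hLL
      · exact absurd ⟨i, (Sum.inl_injective (h1.symm))⟩ ha
      · simp at h1
    · rintro ⟨b, hb, rfl⟩
      exact Or.inl ⟨by simpa using fun h => hb h.symm, rfl⟩
  rw [← SimpleGraph.card_neighborFinset_eq_degree, hnb,
    Finset.card_image_of_injective _ Sum.inl_injective,
    Finset.card_erase_of_mem (Finset.mem_univ a), Finset.card_univ, Fintype.card_fin]

lemma degree_right (a : Fin N) (ha : a ∉ Set.range v') :
    G.degree (Sum.inr a) = N - 1 := by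
  classical
  have hnb : G.neighborFinset (Sum.inr a) = (Finset.univ.erase a).image Sum.inr := by
    ext y
    simp only [SimpleGraph.mem_neighborFinset, Finset.mem_image, Finset.mem_erase,
      Finset.mem_univ, and_true]
    rw [hAdj]
    constructor
    · rintro (⟨hne, hLL⟩ | ⟨i, ⟨h1, h2⟩ | ⟨h1, h2⟩⟩)
      · cases y with
        | inr b => exact ⟨b, fun h => hne (by rw [h]), rfl⟩
        | inl b => simp at hLL
      · simp at h1
      · exact absurd ⟨i, (Sum.inr_injective (h1.symm))⟩ ha
    · rintro ⟨b, hb, rfl⟩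
      exact Or.inl ⟨by simpa using fun h => hb h.symm, rfl⟩
  rw [← SimpleGraph.card_neighborFinset_eq_degree, hnb,
    Finset.card_image_of_injective _ Sum.inr_injective,
    Finset.card_erase_of_mem (Finset.mem_univ a), Finset.card_univ, Fintype.card_fin]

lemma adj_ll (a b : Fin N) : G.Adj (Sum.inl a) (Sum.inl b) ↔ a ≠ b := by
  rw [hAdj]
  constructor
  · rintro (⟨hne, _⟩ | ⟨i, ⟨h1, h2⟩ | ⟨h1, h2⟩⟩)
    · exact fun h => hne (by rw [h])
    · simp at h2
    · simp at h1
  · intro h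
    exact Or.inl ⟨by simpa using h, rfl⟩

lemma adj_rr (a b : Fin N) : G.Adj (Sum.inr a) (Sum.inr b) ↔ a ≠ b := by
  rw [hAdj]
  constructor
  · rintro (⟨hne, _⟩ | ⟨i, ⟨h1, h2⟩ | ⟨h1, h2⟩⟩)
    · exact fun h => hne (by rw [h])
    · simp at h1
    · simp at h2
  · intro h
    exact Or.inl ⟨by simpa using h, rfl⟩

lemma not_adj_rl (b' b : Fin N) (hb : b ∉ Set.range v) : ¬ G.Adj (Sum.inr b') (Sum.inl b) := by
  rw [hAdj]
  rintro (⟨_, hLL⟩ | ⟨i, ⟨h1, h2⟩ | ⟨h1, h2⟩⟩)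
  · simp at hLL
  · simp at h1
  · exact hb ⟨i, (Sum.inl_injective h2.symm)⟩

lemma not_adj_lr (b' b : Fin N) (hb : b ∉ Set.range v') : ¬ G.Adj (Sum.inl b') (Sum.inr b) := by
  rw [hAdj]
  rintro (⟨_, hLL⟩ | ⟨i, ⟨h1, h2⟩ | ⟨h1, h2⟩⟩)
  · simp at hLL
  · exact hb ⟨i, (Sum.inr_injective h2.symm)⟩
  · simp at h2

lemma eig_left (hN : 2 ≤ N)
    (g : Fin N → ℝ) (hgsupp : ∀ a, a ∈ Set.range v → g a = 0)
    (hgsum : ∑ a, g a = 0) :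
    normLap G *ᵥ Sum.elim g 0 = ((N : ℝ) / ((N : ℝ) - 1)) • Sum.elim g 0 := by
  classical
  have hN1 : (1 : ℝ) ≤ (N : ℝ) - 1 := by
    have : (2 : ℝ) ≤ (N : ℝ) := by exact_mod_cast hN
    linarith
  have hN1ne : (N : ℝ) - 1 ≠ 0 := by linarith
  have hdegcast : ∀ a : Fin N, a ∉ Set.range v → (G.degree (Sum.inl a) : ℝ) = (N : ℝ) - 1 := by
    intro a ha
    rw [degree_left v v' G hAdj a ha]
    have h1 : 1 ≤ N := by omega
    push_cast [h1]
    ring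
  rw [normLap, Matrix.sub_mulVec, Matrix.one_mulVec]
  funext x
  have hsum : ∀ x : Fin N ⊕ Fin N,
      ((Matrix.of fun i j => (G.adjMatrix ℝ) i j /
        (Real.sqrt (G.degree i) * Real.sqrt (G.degree j))) *ᵥ Sum.elim g 0) x
      = ∑ b : Fin N, (G.adjMatrix ℝ) x (Sum.inl b) /
          (Real.sqrt (G.degree x) * Real.sqrt (G.degree (Sum.inl b))) * g b := by
    intro x
    rw [Matrix.mulVec, dotProduct, Fintype.sum_sum_type]
    simp
  cases x with
  | inr b' =>
    have hz : ∀ b : Fin N, (G.adjMatrix ℝ) (Sum.inr b') (Sum.inl b) /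
        (Real.sqrt (G.degree (Sum.inr b')) * Real.sqrt (G.degree (Sum.inl b))) * g b = 0 := by
      intro b
      by_cases hb : g b = 0
      · rw [hb, mul_zero]
      · have : ¬ G.Adj (Sum.inr b') (Sum.inl b) :=
          not_adj_rl v v' G hAdj b' b (fun hmem => hb (hgsupp b hmem))
        simp [this]
    simp only [Pi.sub_apply, Pi.smul_apply, Sum.elim_inr, hsum, Finset.sum_congr rfl
      (fun b _ => hz b), Finset.sum_const_zero]
    simp
  | inl a =>
    have hterm : ∀ b : Fin N, (G.adjMatrix ℝ) (Sum.inl a) (Sum.inl b) /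
        (Real.sqrt (G.degree (Sum.inl a)) * Real.sqrt (G.degree (Sum.inl b))) * g b
        = (if a = b then 0 else g b) /
          (Real.sqrt (G.degree (Sum.inl a)) * Real.sqrt ((N:ℝ) - 1)) := by
      intro b
      by_cases hb : g b = 0
      · simp [hb]
      · have hbmem : b ∉ Set.range v := fun hmem => hb (hgsupp b hmem)
        rw [hdegcast b hbmem]
        by_cases hab : a = b
        · subst hab
          simp [SimpleGraph.adjMatrix_apply, (adj_ll v v' G hAdj a a)]
        · have : G.Adj (Sum.inl a) (Sum.inl b) := (adj_ll v v' G hAdj a b).2 hab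
          simp [SimpleGraph.adjMatrix_apply, this, hab]
          ring
    have hsum2 : ∑ b : Fin N, (if a = b then 0 else g b) = - g a := by
      have hsplit : ∀ b : Fin N, (if a = b then 0 else g b)
          = g b - (if a = b then g b else 0) := by
        intro b; by_cases hab : a = b <;> simp [hab]
      rw [Finset.sum_congr rfl (fun b _ => hsplit b), Finset.sum_sub_distrib,
        Finset.sum_ite_eq, hgsum]
      simp
    simp only [Pi.sub_apply, Pi.smul_apply, Sum.elim_inl, hsum, Finset.sum_congr rfl
      (fun b _ => hterm b)]
    rw [← Finset.sum_div, hsum2]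
    by_cases hga : g a = 0
    · rw [hga]
      simp
    · have hamem : a ∉ Set.range v := fun hmem => hga (hgsupp a hmem)
      rw [hdegcast a hamem, Real.mul_self_sqrt (by linarith)]
      field_simp
      ring_nf
      field_simp [show (-1 + (N:ℝ)) ≠ 0 by linarith]

lemma eig_right (hN : 2 ≤ N)
    (g : Fin N → ℝ) (hgsupp : ∀ a, a ∈ Set.range v' → g a = 0)
    (hgsum : ∑ a, g a = 0) :
    normLap G *ᵥ Sum.elim (0 : Fin N → ℝ) g
      = ((N : ℝ) / ((N : ℝ) - 1)) • Sum.elim (0 : Fin N → ℝ) g := by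
  classical
  have hN1 : (1 : ℝ) ≤ (N : ℝ) - 1 := by
    have : (2 : ℝ) ≤ (N : ℝ) := by exact_mod_cast hN
    linarith
  have hN1ne : (N : ℝ) - 1 ≠ 0 := by linarith
  have hdegcast : ∀ a : Fin N, a ∉ Set.range v' → (G.degree (Sum.inr a) : ℝ) = (N : ℝ) - 1 := by
    intro a ha
    rw [degree_right v v' G hAdj a ha]
    have h1 : 1 ≤ N := by omega
    push_cast [h1]
    ring
  rw [normLap, Matrix.sub_mulVec, Matrix.one_mulVec]
  funext x
  have hsum : ∀ x : Fin N ⊕ Fin N,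
      ((Matrix.of fun i j => (G.adjMatrix ℝ) i j /
        (Real.sqrt (G.degree i) * Real.sqrt (G.degree j))) *ᵥ Sum.elim 0 g) x
      = ∑ b : Fin N, (G.adjMatrix ℝ) x (Sum.inr b) /
          (Real.sqrt (G.degree x) * Real.sqrt (G.degree (Sum.inr b))) * g b := by
    intro x
    rw [Matrix.mulVec, dotProduct, Fintype.sum_sum_type]
    simp
  cases x with
  | inl b' =>
    have hz : ∀ b : Fin N, (G.adjMatrix ℝ) (Sum.inl b') (Sum.inr b) /
        (Real.sqrt (G.degree (Sum.inl b')) * Real.sqrt (G.degree (Sum.inr b))) * g b = 0 := by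
      intro b
      by_cases hb : g b = 0
      · rw [hb, mul_zero]
      · have : ¬ G.Adj (Sum.inl b') (Sum.inr b) :=
          not_adj_lr v v' G hAdj b' b (fun hmem => hb (hgsupp b hmem))
        simp [this]
    simp only [Pi.sub_apply, Pi.smul_apply, Sum.elim_inl, hsum, Finset.sum_congr rfl
      (fun b _ => hz b), Finset.sum_const_zero]
    simp
  | inr a =>
    have hterm : ∀ b : Fin N, (G.adjMatrix ℝ) (Sum.inr a) (Sum.inr b) /
        (Real.sqrt (G.degree (Sum.inr a)) * Real.sqrt (G.degree (Sum.inr b))) * g b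
        = (if a = b then 0 else g b) /
          (Real.sqrt (G.degree (Sum.inr a)) * Real.sqrt ((N:ℝ) - 1)) := by
      intro b
      by_cases hb : g b = 0
      · simp [hb]
      · have hbmem : b ∉ Set.range v' := fun hmem => hb (hgsupp b hmem)
        rw [hdegcast b hbmem]
        by_cases hab : a = b
        · subst hab
          simp [SimpleGraph.adjMatrix_apply, (adj_rr v v' G hAdj a a)]
        · have : G.Adj (Sum.inr a) (Sum.inr b) := (adj_rr v v' G hAdj a b).2 hab
          simp [SimpleGraph.adjMatrix_apply, this, hab]
          ring
    have hsum2 : ∑ b : Fin N, (if a = b then 0 else g b) = - g a := by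
      have hsplit : ∀ b : Fin N, (if a = b then 0 else g b)
          = g b - (if a = b then g b else 0) := by
        intro b; by_cases hab : a = b <;> simp [hab]
      rw [Finset.sum_congr rfl (fun b _ => hsplit b), Finset.sum_sub_distrib,
        Finset.sum_ite_eq, hgsum]
      simp
    simp only [Pi.sub_apply, Pi.smul_apply, Sum.elim_inr, hsum, Finset.sum_congr rfl
      (fun b _ => hterm b)]
    rw [← Finset.sum_div, hsum2]
    by_cases hga : g a = 0
    · rw [hga]
      simp
    · have hamem : a ∉ Set.range v' := fun hmem => hga (hgsupp a hmem)
      rw [hdegcast a hamem, Real.mul_self_sqrt (by linarith)]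
      field_simp
      ring_nf
      field_simp [show (-1 + (N:ℝ)) ≠ 0 by linarith]

end Aux

/-- Let `Γ_N` be the graph formed by two disjoint complete graphs `K_N, K'_N` joined by `c`
additional edges `(v_i, v'_i)` with `v_i ∈ K_N`, `v'_i ∈ K'_N`, the `v_i` distinct and the
`v'_i` distinct, and `c < N - 1`. Then `N/(N-1)` is an eigenvalue of the normalized
Laplacian of `Γ_N` with multiplicity at least `2(N-1-c)`. -/
theorem normLap_joined_complete_graphs_eigenvalue_multiplicity
    (N c : ℕ) (hN : 2 ≤ N) (hc : c < N - 1)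
    (v v' : Fin c → Fin N) (hv : Function.Injective v) (hv' : Function.Injective v')
    (G : SimpleGraph (Fin N ⊕ Fin N))
    (hAdj : ∀ x y, G.Adj x y ↔
      (x ≠ y ∧ x.isLeft = y.isLeft) ∨
        ∃ i, (x = Sum.inl (v i) ∧ y = Sum.inr (v' i)) ∨
             (x = Sum.inr (v' i) ∧ y = Sum.inl (v i)))
    (hH : (normLap G).IsHermitian) :
    2 * (N - 1 - c) ≤
      (Finset.univ.filter fun i => hH.eigenvalues i = (N : ℝ) / ((N : ℝ) - 1)).card := by
  classical
  set k := N - 1 - c with hk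
  -- the "free" vertices on each side
  have hcard : ∀ w : Fin c → Fin N, Function.Injective w →
      ((Finset.univ.image w)ᶜ : Finset (Fin N)).card = k + 1 := by
    intro w hw
    rw [Finset.card_compl, Finset.card_image_of_injective _ hw]
    simp only [Finset.card_univ, Fintype.card_fin]
    omega
  set S : Finset (Fin N) := (Finset.univ.image v)ᶜ with hS
  set S' : Finset (Fin N) := (Finset.univ.image v')ᶜ with hS'
  have hkS : S.card = k + 1 := hcard v hv
  have hkS' : S'.card = k + 1 := hcard v' hv'
  set E : Fin (k + 1) → Fin N := fun i => (S.orderIsoOfFin hkS i : Fin N) with hE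
  set E' : Fin (k + 1) → Fin N := fun i => (S'.orderIsoOfFin hkS' i : Fin N) with hE'
  have hEinj : Function.Injective E :=
    fun i j h => (S.orderIsoOfFin hkS).injective (Subtype.ext h)
  have hE'inj : Function.Injective E' :=
    fun i j h => (S'.orderIsoOfFin hkS').injective (Subtype.ext h)
  have hEnot : ∀ i, E i ∉ Set.range v := by
    intro i hmem
    have h1 : E i ∈ S := (S.orderIsoOfFin hkS i).2
    rw [hS, Finset.mem_compl] at h1
    exact h1 (Finset.mem_image.mpr ⟨hmem.choose, Finset.mem_univ _, hmem.choose_spec⟩)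
  have hE'not : ∀ i, E' i ∉ Set.range v' := by
    intro i hmem
    have h1 : E' i ∈ S' := (S'.orderIsoOfFin hkS' i).2
    rw [hS', Finset.mem_compl] at h1
    exact h1 (Finset.mem_image.mpr ⟨hmem.choose, Finset.mem_univ _, hmem.choose_spec⟩)
  -- the eigenvectors
  set g : Fin k → Fin N → ℝ := fun j => Pi.single (E j.succ) (1:ℝ) - Pi.single (E 0) 1 with hg
  set g' : Fin k → Fin N → ℝ :=
    fun j => Pi.single (E' j.succ) (1:ℝ) - Pi.single (E' 0) 1 with hg'
  have hgsupp : ∀ j a, a ∈ Set.range v → g j a = 0 := by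
    intro j a ha
    have h1 : a ≠ E j.succ := fun h => hEnot j.succ (h ▸ ha)
    have h2 : a ≠ E 0 := fun h => hEnot 0 (h ▸ ha)
    simp [hg, Pi.single_apply, h1, h2]
  have hg'supp : ∀ j a, a ∈ Set.range v' → g' j a = 0 := by
    intro j a ha
    have h1 : a ≠ E' j.succ := fun h => hE'not j.succ (h ▸ ha)
    have h2 : a ≠ E' 0 := fun h => hE'not 0 (h ▸ ha)
    simp [hg', Pi.single_apply, h1, h2]
  have hgsum : ∀ j, ∑ a, g j a = 0 := by
    intro j
    simp [hg, Finset.sum_sub_distrib, Finset.sum_pi_single']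
  have hg'sum : ∀ j, ∑ a, g' j a = 0 := by
    intro j
    simp [hg', Finset.sum_sub_distrib, Finset.sum_pi_single']
  set F : Fin k ⊕ Fin k → (Fin N ⊕ Fin N) → ℝ :=
    Sum.elim (fun j => Sum.elim (g j) 0) (fun j => Sum.elim 0 (g' j)) with hF
  -- eigen equation
  have heig : ∀ i, normLap G *ᵥ F i = ((N : ℝ) / ((N : ℝ) - 1)) • F i := by
    rintro (j | j)
    · exact eig_left v v' G hAdj hN (g j) (hgsupp j) (hgsum j)
    · exact eig_right v v' G hAdj hN (g' j) (hg'supp j) (hg'sum j)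
  -- linear independence
  have hgval : ∀ (E₀ : Fin (k+1) → Fin N) (hinj : Function.Injective E₀) (i j : Fin k),
      ((Pi.single (E₀ i.succ) 1 - Pi.single (E₀ 0) 1 : Fin N → ℝ)) (E₀ j.succ)
        = if j = i then 1 else 0 := by
    intro E₀ hinj i j
    have h2 : E₀ j.succ ≠ E₀ 0 := fun h => (Fin.succ_ne_zero j) (hinj h)
    by_cases hij : j = i
    · subst hij; simp [Pi.single_apply, h2]
    · have h1 : E₀ j.succ ≠ E₀ i.succ := fun h => hij (Fin.succ_injective _ (hinj h))
      simp [Pi.single_apply, h1, h2, hij]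
  have hlin : LinearIndependent ℝ F := by
    rw [Fintype.linearIndependent_iff]
    intro w hw
    have hwL : ∀ j : Fin k, w (Sum.inl j) = 0 := by
      intro j
      have h0 := congrFun hw (Sum.inl (E j.succ))
      rw [show ∀ u : (Fin k ⊕ Fin k) → (Fin N ⊕ Fin N) → ℝ,
          (∑ i, u i) (Sum.inl (E j.succ)) = ∑ i, u i (Sum.inl (E j.succ)) from
        fun u => Finset.sum_apply _ Finset.univ u, Fintype.sum_sum_type] at h0
      simp only [hF, Pi.smul_apply, Sum.elim_inl, Sum.elim_inr, smul_eq_mul, Pi.zero_apply,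
        mul_zero, Finset.sum_const_zero, add_zero] at h0
      have h1 : ∀ i : Fin k, w (Sum.inl i) * g i (E j.succ)
          = if i = j then w (Sum.inl i) else 0 := by
        intro i
        rw [show g i (E j.succ) = if j = i then 1 else 0 from hgval E hEinj i j]
        by_cases hij : i = j
        · subst hij; simp
        · simp [hij, show ¬ j = i from fun h => hij h.symm]
      rw [Finset.sum_congr rfl (fun i _ => h1 i), Finset.sum_ite_eq' Finset.univ j] at h0
      simpa using h0
    have hwR : ∀ j : Fin k, w (Sum.inr j) = 0 := by
      intro j
      have h0 := congrFun hw (Sum.inr (E' j.succ))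
      rw [show ∀ u : (Fin k ⊕ Fin k) → (Fin N ⊕ Fin N) → ℝ,
          (∑ i, u i) (Sum.inr (E' j.succ)) = ∑ i, u i (Sum.inr (E' j.succ)) from
        fun u => Finset.sum_apply _ Finset.univ u, Fintype.sum_sum_type] at h0
      simp only [hF, Pi.smul_apply, Sum.elim_inl, Sum.elim_inr, smul_eq_mul, Pi.zero_apply,
        mul_zero, Finset.sum_const_zero, zero_add] at h0
      have h1 : ∀ i : Fin k, w (Sum.inr i) * g' i (E' j.succ)
          = if i = j then w (Sum.inr i) else 0 := by
        intro i
        rw [show g' i (E' j.succ) = if j = i then 1 else 0 from hgval E' hE'inj i j]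
        by_cases hij : i = j
        · subst hij; simp
        · simp [hij, show ¬ j = i from fun h => hij h.symm]
      rw [Finset.sum_congr rfl (fun i _ => h1 i), Finset.sum_ite_eq' Finset.univ j] at h0
      simpa using h0
    rintro (j | j)
    · exact hwL j
    · exact hwR j
  have := aux_count hH ((N : ℝ) / ((N : ℝ) - 1)) _
    (hlin.map' (WithLp.linearEquiv 2 ℝ _).symm.toLinearMap (LinearEquiv.ker _)) heig
  simpa [two_mul] using this
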